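/- Let a = (a₁, …, a₂ₙ) be an even continued form with value x ∈ ℚ. Then the integer matrix β(a, 1) ∈ SL₂(ℤ) sends ∞ to x under its Möbius action; more precisely, writing v = β(a, 1) · (1, 0)ᵀ ∈ ℤ², one has v₂ ≠ 0 and v₁ / v₂ = x. -/

import Mathlib

open Matrix

/-- The generator σ₁ = σ₁(1) = [[1, −1], [0, 1]] of SL₂(ℤ). -/
def S1 : Matrix (Fin 2) (Fin 2) ℤ := !![1, -1; 0, 1]

/-- The generator σ₂ = σ₂(1) = [[1, 0], [1, 1]] of SL₂(ℤ). -/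
def S2 : Matrix (Fin 2) (Fin 2) ℤ := !![1, 0; 1, 1]

/-- `betaInt a k` is the product of the first `k` alternating factors
`σ₁^{-a 1} · σ₂^{a 2} · σ₁^{-a 3} ⋯` (indices start at 1), i.e. β(a, 1). -/
noncomputable def betaInt (a : ℕ → ℤ) : ℕ → Matrix (Fin 2) (Fin 2) ℤ
  | 0 => 1
  | k + 1 => betaInt a k *
      (if (k + 1) % 2 = 1 then S1 ^ (-(a (k + 1))) else S2 ^ (a (k + 1)))

/-- `a` (on indices 1,…,2n) is an even continued form: either `a₁ ≥ 0` and `aᵢ ≥ 1` for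
`2 ≤ i ≤ 2n`, or `a₁ ≤ 0` and `aᵢ ≤ −1` for `2 ≤ i ≤ 2n`. -/
def IsEvenForm (n : ℕ) (a : ℕ → ℤ) : Prop :=
  1 ≤ n ∧ ((0 ≤ a 1 ∧ ∀ i, 2 ≤ i → i ≤ 2 * n → 1 ≤ a i)
    ∨ (a 1 ≤ 0 ∧ ∀ i, 2 ≤ i → i ≤ 2 * n → a i ≤ -1))

/-- Value of the continued fraction `a i + 1/(a (i+1) + 1/(⋯ + 1/(a last)))`. -/
def cfVal (a : ℕ → ℤ) (last i : ℕ) : ℚ :=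
  if last ≤ i then (a i : ℚ)
  else (a i : ℚ) + 1 / cfVal a last (i + 1)
termination_by last - i
decreasing_by omega

lemma S1_det : IsUnit S1.det := by simp [S1, Matrix.det_fin_two_of]
lemma S1_inv : S1⁻¹ = !![1, 1; 0, 1] := by
  apply Matrix.inv_eq_right_inv
  simp [S1, Matrix.mul_fin_two, Matrix.one_fin_two]
lemma S1_zpow (k : ℤ) : S1 ^ k = !![1, -k; 0, 1] := by
  induction k using Int.induction_on with
  | zero => simp [Matrix.one_fin_two]
  | succ n ih => rw [Matrix.zpow_add_one S1_det, ih]; simp [S1, Matrix.mul_fin_two]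
  | pred n ih => rw [show (-(n:ℤ) - 1) = (-n) - 1 by ring, Matrix.zpow_sub_one S1_det, ih, S1_inv]
                 simp [Matrix.mul_fin_two]
lemma S2_det : IsUnit S2.det := by simp [S2, Matrix.det_fin_two_of]
lemma S2_inv : S2⁻¹ = !![1, 0; -1, 1] := by
  apply Matrix.inv_eq_right_inv
  simp [S2, Matrix.mul_fin_two, Matrix.one_fin_two]
lemma S2_zpow (k : ℤ) : S2 ^ k = !![1, 0; k, 1] := by
  induction k using Int.induction_on with
  | zero => simp [Matrix.one_fin_two]
  | succ n ih => rw [Matrix.zpow_add_one S2_det, ih]; simp [S2, Matrix.mul_fin_two]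
  | pred n ih => rw [show (-(n:ℤ) - 1) = (-n) - 1 by ring, Matrix.zpow_sub_one S2_det, ih, S2_inv]
                 simp [Matrix.mul_fin_two]; ring_nf

/-- The `i`-th alternating factor. -/
noncomputable def Tfac (a : ℕ → ℤ) (i : ℕ) : Matrix (Fin 2) (Fin 2) ℤ :=
  if i % 2 = 1 then S1 ^ (-(a i)) else S2 ^ (a i)

/-- Suffix vector: `T_i · T_{i+1} ⋯ T_last · (1,0)ᵀ`. -/
noncomputable def wvec (a : ℕ → ℤ) (last i : ℕ) : Fin 2 → ℤ :=
  if last < i then ![1, 0] else Tfac a i *ᵥ wvec a last (i + 1)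
termination_by last + 1 - i
decreasing_by omega

lemma betaInt_succ (a : ℕ → ℤ) (k : ℕ) :
    betaInt a (k + 1) = betaInt a k * Tfac a (k + 1) := rfl

lemma betaInt_shift (a : ℕ → ℤ) : ∀ m i, betaInt a (i + m) *ᵥ ![1, 0]
    = betaInt a i *ᵥ wvec a (i + m) (i + 1) := by
  intro m
  induction m with
  | zero => intro i; rw [wvec]; simp
  | succ m ih =>
      intro i
      have h1 : i + (m + 1) = (i + 1) + m := by ring
      rw [h1, ih (i + 1), betaInt_succ, ← Matrix.mulVec_mulVec]
      conv_rhs => rw [wvec]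
      rw [if_neg (show ¬ (i + 1 + m < i + 1) by omega)]

lemma cf_pos (a : ℕ → ℤ) (last : ℕ) (h : ∀ j, 2 ≤ j → j ≤ last → 1 ≤ a j) :
    ∀ m i, last = i + m → 2 ≤ i → 1 ≤ cfVal a last i := by
  intro m
  induction m with
  | zero =>
      intro i hi h2
      rw [cfVal, if_pos (show last ≤ i by omega)]
      exact_mod_cast h i h2 (by omega)
  | succ m ih =>
      intro i hi h2
      have h3 : ¬ (last ≤ i) := by omega
      rw [cfVal, if_neg h3]
      have hc := ih (i + 1) (by omega) (by omega)
      have : (0:ℚ) < 1 / cfVal a last (i + 1) := by positivity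
      have ha : (1:ℚ) ≤ (a i : ℚ) := by exact_mod_cast h i h2 (by omega)
      linarith

lemma cf_neg (a : ℕ → ℤ) (last : ℕ) (h : ∀ j, 2 ≤ j → j ≤ last → a j ≤ -1) :
    ∀ m i, last = i + m → 2 ≤ i → cfVal a last i ≤ -1 := by
  intro m
  induction m with
  | zero =>
      intro i hi h2
      rw [cfVal, if_pos (show last ≤ i by omega)]
      exact_mod_cast h i h2 (by omega)
  | succ m ih =>
      intro i hi h2
      have h3 : ¬ (last ≤ i) := by omega
      rw [cfVal, if_neg h3]
      have hc := ih (i + 1) (by omega) (by omega)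
      have hlt : cfVal a last (i + 1) < 0 := by linarith
      have : 1 / cfVal a last (i + 1) < 0 := by
        exact one_div_neg.mpr hlt
      have ha : (a i : ℚ) ≤ -1 := by exact_mod_cast h i h2 (by omega)
      linarith

lemma mulVec_fin_two (p q r s x y : ℤ) :
    !![p, q; r, s] *ᵥ ![x, y] = ![p * x + q * y, r * x + s * y] := by
  funext j
  fin_cases j <;> simp [Matrix.mulVec, dotProduct, Fin.sum_univ_two]

lemma core (a : ℕ → ℤ) (last : ℕ) (hlast2 : last % 2 = 0)
    (hne : ∀ j, 2 ≤ j → j ≤ last → cfVal a last j ≠ 0) :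
    ∀ m i, last = i + m → 1 ≤ i →
    (i % 2 = 1 → wvec a last i 1 ≠ 0 ∧
        ((wvec a last i 0 : ℚ) / (wvec a last i 1 : ℚ) = cfVal a last i)) ∧
    (i % 2 = 0 → wvec a last i 0 ≠ 0 ∧
        ((wvec a last i 1 : ℚ) / (wvec a last i 0 : ℚ) = cfVal a last i)) := by
  intro m
  induction m with
  | zero =>
      intro i hi h1
      have hieq : i = last := by omega
      have hi0 : i % 2 = 0 := by omega
      constructor
      · intro h; omega
      · intro _
        rw [wvec, if_neg (by omega)]
        rw [wvec, if_pos (by omega)]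
        rw [Tfac, if_neg (by omega), S2_zpow, mulVec_fin_two]
        rw [cfVal, if_pos (by omega)]
        norm_num
  | succ m ih =>
      intro i hi h1
      have hlt : i < last := by omega
      have ih' := ih (i + 1) (by omega) (by omega)
      rw [wvec, if_neg (by omega)]
      set w0 := wvec a last (i + 1) 0 with hw0def
      set w1 := wvec a last (i + 1) 1 with hw1def
      have hw : wvec a last (i + 1) = ![w0, w1] := by
        funext j; fin_cases j <;> rfl
      have hcne : cfVal a last (i + 1) ≠ 0 := hne (i + 1) (by omega) (by omega)
      have hcf : cfVal a last i = (a i : ℚ) + 1 / cfVal a last (i + 1) := by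
        rw [cfVal, if_neg (by omega)]
      rcases Nat.even_or_odd i with he | ho
      · -- i even
        have hi0 : i % 2 = 0 := Nat.even_iff.mp he
        have hi1 : (i + 1) % 2 = 1 := by omega
        obtain ⟨hw1ne, hrat⟩ := ih'.1 hi1
        have hw1q : (w1 : ℚ) ≠ 0 := Int.cast_ne_zero.mpr hw1ne
        have hw0q : (w0 : ℚ) ≠ 0 := by
          intro h
          rw [h, zero_div] at hrat
          exact hcne hrat.symm
        have hw0ne : w0 ≠ 0 := fun h => hw0q (by exact_mod_cast congrArg (Int.cast : ℤ → ℚ) h)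
        rw [Tfac, if_neg (by omega), S2_zpow, hw, mulVec_fin_two]
        have h1c : 1 / cfVal a last (i + 1) = (w1 : ℚ) / (w0 : ℚ) := by
          rw [← hrat, one_div_div]
        constructor
        · intro h; omega
        · intro _
          constructor
          · simpa using hw0ne
          · simp only [Matrix.cons_val_zero, Matrix.cons_val_one, Matrix.head_cons]
            rw [hcf, h1c]
            push_cast
            field_simp
            grind
      · -- i odd
        have hi1 : i % 2 = 1 := Nat.odd_iff.mp ho
        have hi0 : (i + 1) % 2 = 0 := by omega
        obtain ⟨hw0ne, hrat⟩ := ih'.2 hi0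
        have hw0q : (w0 : ℚ) ≠ 0 := Int.cast_ne_zero.mpr hw0ne
        have hw1q : (w1 : ℚ) ≠ 0 := by
          intro h
          rw [h, zero_div] at hrat
          exact hcne hrat.symm
        have hw1ne : w1 ≠ 0 := fun h => hw1q (by exact_mod_cast congrArg (Int.cast : ℤ → ℚ) h)
        rw [Tfac, if_pos (by omega), S1_zpow, hw, _root_.mulVec_fin_two]
        have h1c : 1 / cfVal a last (i + 1) = (w0 : ℚ) / (w1 : ℚ) := by
          rw [← hrat, one_div_div]
        constructor
        · intro _
          constructor
          · simpa using hw1ne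
          · simp only [Matrix.cons_val_zero, Matrix.cons_val_one, Matrix.head_cons]
            rw [hcf, h1c]
            push_cast
            field_simp
            grind
        · intro h; omega

/-- if `a` is an even continued form with value x ∈ ℚ, then the integer
matrix β(a, 1) sends ∞ to x under its Möbius action: for v = β(a, 1)·(1, 0)ᵀ ∈ ℤ²
one has v₂ ≠ 0 and v₁ / v₂ = x. -/
theorem betaInt_maps_infty_to_value (n : ℕ) (a : ℕ → ℤ) (x : ℚ)
    (hform : IsEvenForm n a) (hval : cfVal a (2 * n) 1 = x) :
    (betaInt a (2 * n) *ᵥ ![1, 0]) 1 ≠ 0 ∧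
      ((betaInt a (2 * n) *ᵥ ![1, 0]) 0 : ℚ) / ((betaInt a (2 * n) *ᵥ ![1, 0]) 1 : ℚ) = x := by
  obtain ⟨hn, hcase⟩ := hform
  have hlast2 : (2 * n) % 2 = 0 := by omega
  have hne : ∀ j, 2 ≤ j → j ≤ 2 * n → cfVal a (2 * n) j ≠ 0 := by
    rcases hcase with ⟨_, h⟩ | ⟨_, h⟩
    · intro j h2 hj
      have := cf_pos a (2 * n) h (2 * n - j) j (by omega) h2
      intro hc; rw [hc] at this; linarith
    · intro j h2 hj
      have := cf_neg a (2 * n) h (2 * n - j) j (by omega) h2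
      intro hc; rw [hc] at this; linarith
  have hshift := betaInt_shift a (2 * n) 0
  simp only [Nat.zero_add] at hshift
  have hbeta0 : betaInt a 0 = 1 := rfl
  rw [hbeta0, Matrix.one_mulVec] at hshift
  have hcore := (core a (2 * n) hlast2 hne (2 * n - 1) 1 (by omega) le_rfl).1 (by norm_num)
  rw [hshift, ← hval]
  exact hcore
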